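/- Every weighted simple game has an integer-weight representation: if there exist w ∈ ℝ^N and q ∈ ℝ with S ∈ W ⟺ Σ_{i∈S} w_i ≥ q for all S ⊆ N, then there exist integer w' ∈ ℤ^N and q' ∈ ℤ with the same property. -/

import Mathlib

open Finset

/-- A square real matrix has all entries in {0,1}. -/
def IsZeroOne {k : ℕ} (M : Matrix (Fin k) (Fin k) ℝ) : Prop :=
  ∀ i j, M i j = 0 ∨ M i j = 1

/-- `alpha k` is the maximum of `|det M|` over k×k 0–1 matrices. -/
noncomputable def alpha (k : ℕ) : ℝ :=
  sSup {x : ℝ | ∃ M : Matrix (Fin k) (Fin k) ℝ, IsZeroOne M ∧ x = |M.det|}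

/-- A simple game with player set `Fin n`, given by its set `W` of winning
coalitions, is weighted. -/
def IsWeighted {n : ℕ} (W : Set (Finset (Fin n))) : Prop :=
  ∃ (w : Fin n → ℝ) (q : ℝ), ∀ S : Finset (Fin n), S ∈ W ↔ q ≤ ∑ i ∈ S, w i

/-- `(X; Y)` is a trading transform: every player occurs equally often
among the `X`'s and among the `Y`'s. -/
def IsTradingTransform {n j : ℕ} (X Y : Fin j → Finset (Fin n)) : Prop :=
  ∀ p : Fin n,
    (Finset.univ.filter fun i => p ∈ X i).card =
    (Finset.univ.filter fun i => p ∈ Y i).card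

/-- The game `W` is `k`-trade robust (for a real bound `k`): there is no trading
transform of size `j` with `1 ≤ j ≤ k` turning winning coalitions into losing ones. -/
def TradeRobustUpTo {n : ℕ} (W : Set (Finset (Fin n))) (k : ℝ) : Prop :=
  ¬ ∃ (j : ℕ) (X Y : Fin j → Finset (Fin n)),
      1 ≤ j ∧ (j : ℝ) ≤ k ∧ IsTradingTransform X Y ∧
      (∀ i, X i ∈ W) ∧ (∀ i, Y i ∉ W)

lemma exists_int_mul (x : ℚ) (m : ℕ) (h : x.den ∣ m) : ∃ z : ℤ, (z : ℚ) = (m : ℚ) * x := by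
  obtain ⟨k, hk⟩ := h
  refine ⟨k * x.num, ?_⟩
  have hd : (x.den : ℚ) ≠ 0 := by exact_mod_cast x.den_nz
  have hden : (x.den : ℚ) * x = (x.num : ℚ) := by
    rw [mul_comm, ← eq_div_iff hd]
    exact (Rat.num_div_den x).symm
  push_cast [hk]
  rw [← hden]
  ring

lemma rat_weighted {n : ℕ} (W : Set (Finset (Fin n))) (hweighted : IsWeighted W) :
    ∃ (r : Fin n → ℚ) (p : ℚ), ∀ S : Finset (Fin n), S ∈ W ↔ (p : ℝ) ≤ ∑ i ∈ S, (r i : ℝ) := by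
  classical
  obtain ⟨w, q, hw⟩ := hweighted
  by_cases hall : ∀ S : Finset (Fin n), S ∈ W
  · exact ⟨0, 0, fun S => by simp [hall S]⟩
  push_neg at hall
  obtain ⟨S₀, hS₀⟩ := hall
  set L : Finset (Finset (Fin n)) := Finset.univ.filter (fun S => S ∉ W) with hL
  have hLne : L.Nonempty := ⟨S₀, by simp [hL, hS₀]⟩
  set ε : ℝ := L.inf' hLne (fun S => q - ∑ i ∈ S, w i) with hεdef
  have hε : 0 < ε := by
    rw [hεdef, Finset.lt_inf'_iff]
    intro S hS
    have hSW : S ∉ W := by simpa [hL] using hS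
    have : ¬ q ≤ ∑ i ∈ S, w i := fun h => hSW ((hw S).mpr h)
    linarith [lt_of_not_ge this]
  set δ : ℝ := ε / (4 * n + 4) with hδdef
  have hδ : 0 < δ := by
    apply div_pos hε
    positivity
  have hnδ : 2 * (n : ℝ) * δ < ε := by
    have h4 : (0:ℝ) < 4 * n + 4 := by positivity
    rw [hδdef, ← mul_div_assoc, div_lt_iff₀ h4]
    nlinarith [hε, Nat.cast_nonneg (α := ℝ) n]
  have hnear : ∀ i, ∃ ri : ℚ, |w i - (ri : ℝ)| < δ := fun i => exists_rat_near (w i) hδ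
  choose r hr using hnear
  have hsum : ∀ S : Finset (Fin n), |(∑ i ∈ S, w i) - ∑ i ∈ S, (r i : ℝ)| ≤ (n : ℝ) * δ := by
    intro S
    rw [← Finset.sum_sub_distrib]
    calc |∑ i ∈ S, (w i - (r i : ℝ))| ≤ ∑ i ∈ S, |w i - (r i : ℝ)| :=
          Finset.abs_sum_le_sum_abs _ _
      _ ≤ ∑ _i ∈ S, δ := Finset.sum_le_sum fun i _ => (hr i).le
      _ = S.card * δ := by rw [Finset.sum_const, nsmul_eq_mul]
      _ ≤ (n : ℝ) * δ := by
          apply mul_le_mul_of_nonneg_right _ hδ.le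
          exact_mod_cast (Finset.card_le_univ S).trans_eq (by simp)
  obtain ⟨p, hp1, hp2⟩ := exists_rat_btwn (show q - ε + (n : ℝ) * δ < q - (n : ℝ) * δ by linarith)
  refine ⟨r, p, fun S => ?_⟩
  constructor
  · intro hS
    have hq : q ≤ ∑ i ∈ S, w i := (hw S).mp hS
    have := (abs_le.mp (hsum S)).2
    linarith
  · intro hle
    by_contra hS
    have hεS : ε ≤ q - ∑ i ∈ S, w i :=
      Finset.inf'_le _ (by simp [hL, hS])
    have := (abs_le.mp (hsum S)).1
    linarith

theorem stmt_9 {n : ℕ} (W : Set (Finset (Fin n))) (hweighted : IsWeighted W) :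
    ∃ (w : Fin n → ℤ) (q : ℤ),
      ∀ S : Finset (Fin n), S ∈ W ↔ q ≤ ∑ i ∈ S, w i := by
  obtain ⟨r, p, hr⟩ := rat_weighted W hweighted
  have hr' : ∀ S : Finset (Fin n), S ∈ W ↔ p ≤ ∑ i ∈ S, r i := by
    intro S
    rw [hr S]
    constructor <;> intro h <;> exact_mod_cast h
  set D : ℕ := p.den * ∏ i, (r i).den with hD
  have hDpos : 0 < D := by
    apply Nat.mul_pos p.pos
    exact Finset.prod_pos fun i _ => (r i).pos
  obtain ⟨Q, hQ⟩ := exists_int_mul p D (Dvd.intro _ rfl)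
  have hz : ∀ i : Fin n, ∃ z : ℤ, (z : ℚ) = (D : ℚ) * r i := by
    intro i
    exact exists_int_mul (r i) D (Dvd.dvd.mul_left (Finset.dvd_prod_of_mem _ (Finset.mem_univ i)) _)
  choose z hzz using hz
  refine ⟨z, Q, fun S => ?_⟩
  rw [hr' S, ← Int.cast_le (R := ℚ)]
  push_cast
  simp only [hzz, hQ, ← Finset.mul_sum]
  constructor
  · intro h
    exact mul_le_mul_of_nonneg_left h (by positivity)
  · intro h
    exact le_of_mul_le_mul_left h (by exact_mod_cast hDpos)
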